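/- Let Z ⊂ ℝⁿ be a compact convex set and y ∈ Z \ ∂Z. Then b(y) > 0. Consequently, in the compact finite-dimensional setting, b(y) = 0 if and only if y ∈ ∂Z. -/

import Mathlib

open Set

/-- The weight function `t_y(x) = sup{ t ∈ [0,1) : (y - t·x)/(1-t) ∈ Z }`. -/
noncomputable def weight {V : Type*} [AddCommGroup V] [Module ℝ V] (Z : Set V) (y x : V) : ℝ :=
  sSup {t : ℝ | 0 ≤ t ∧ t < 1 ∧ (1 - t)⁻¹ • (y - t • x) ∈ Z}

/-- The boundariness `b(y) = inf_{x ∈ Z} t_y(x)`. -/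
noncomputable def bdness {V : Type*} [AddCommGroup V] [Module ℝ V] (Z : Set V) (y : V) : ℝ :=
  sInf (weight Z y '' Z)

lemma weight_set_zero_mem {V : Type*} [AddCommGroup V] [Module ℝ V] {Z : Set V} {y : V}
    (hy : y ∈ Z) (x : V) :
    (0 : ℝ) ∈ {t : ℝ | 0 ≤ t ∧ t < 1 ∧ (1 - t)⁻¹ • (y - t • x) ∈ Z} := by
  refine ⟨le_refl 0, zero_lt_one, ?_⟩
  simp [hy]

lemma weight_set_bddAbove {V : Type*} [AddCommGroup V] [Module ℝ V] (Z : Set V) (y x : V) :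
    BddAbove {t : ℝ | 0 ≤ t ∧ t < 1 ∧ (1 - t)⁻¹ • (y - t • x) ∈ Z} :=
  ⟨1, fun t ht => ht.2.1.le⟩

lemma weight_nonneg {V : Type*} [AddCommGroup V] [Module ℝ V] {Z : Set V} {y : V}
    (hy : y ∈ Z) (x : V) : 0 ≤ weight Z y x :=
  le_csSup (weight_set_bddAbove Z y x) (weight_set_zero_mem hy x)

/-- Uniform absorption lemma. -/
lemma absorb {E : Type*} [NormedAddCommGroup E] [NormedSpace ℝ E] [FiniteDimensional ℝ E]
    {C : Set E} (hC : Convex ℝ C) (hcomp : IsCompact C) (h0 : (0:E) ∈ C)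
    (H : ∀ v ∈ C, ∃ s : ℝ, 0 < s ∧ -s • v ∈ C) :
    ∃ σ : ℝ, 0 < σ ∧ ∀ v ∈ C, -σ • v ∈ C := by
  classical
  set W := Submodule.span ℝ C with hW
  set D : Set W := W.subtype ⁻¹' C with hD
  have hDconv : Convex ℝ D := hC.linear_preimage W.subtype
  have h0D : (0 : W) ∈ D := by simpa [hD] using h0
  -- D spans W as a submodule
  have hspanD : Submodule.span ℝ D = ⊤ := by
    rw [Submodule.eq_top_iff']
    intro x
    have hx : (x : E) ∈ Submodule.span ℝ C := x.2
    have himg : C = W.subtype '' D := by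
      ext c
      constructor
      · intro hc
        exact ⟨⟨c, Submodule.subset_span hc⟩, hc, rfl⟩
      · rintro ⟨d, hd, rfl⟩
        exact hd
    rw [himg, Submodule.span_image] at hx
    obtain ⟨d, hd, hdx⟩ := hx
    have : d = x := Subtype.ext hdx
    rwa [this] at hd
  -- affine span of D is ⊤
  have haff : affineSpan ℝ D = ⊤ := by
    have hne : D.Nonempty := ⟨0, h0D⟩
    rw [AffineSubspace.affineSpan_eq_top_iff_vectorSpan_eq_top_of_nonempty ℝ ↥W ↥W hne]
    rw [eq_top_iff, ← hspanD, Submodule.span_le]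
    intro d hd
    have := vsub_mem_vectorSpan ℝ hd h0D
    simpa using this
  -- interior of D is nonempty
  have hint : (interior D).Nonempty := hDconv.interior_nonempty_iff_affineSpan_eq_top.mpr haff
  -- 0 ∈ interior D
  have h0int : (0 : W) ∈ interior D := by
    by_contra h0i
    obtain ⟨f, hf⟩ := geometric_hahn_banach_open_point (hDconv.interior) isOpen_interior h0i
    simp only [map_zero] at hf
    obtain ⟨a0, ha0⟩ := hint
    have hfa0 : f a0 < 0 := hf a0 ha0
    -- f ≤ 0 on D
    have hfle : ∀ a ∈ D, f a ≤ 0 := by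
      intro a ha
      by_contra hpos
      push_neg at hpos
      set A := f a0
      set B := f a
      set lam : ℝ := -A / (B - A) with hlam
      have hBA : 0 < B - A := by linarith
      have hlam0 : 0 ≤ lam := by
        apply div_nonneg (by linarith) hBA.le
      have hlam1 : 0 < 1 - lam := by
        rw [hlam]
        rw [sub_pos, div_lt_one hBA]
        linarith
      have hmem : (1 - lam) • a0 + lam • a ∈ interior D :=
        hDconv.combo_interior_self_mem_interior ha0 ha hlam1 hlam0 (by ring)
      have := hf _ hmem
      rw [map_add, map_smul, map_smul] at this
      have hval : (1 - lam) * A + lam * B = 0 := by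
        rw [hlam]; field_simp; ring
      simp only [smul_eq_mul] at this
      rw [show f a0 = A from rfl, show f a = B from rfl] at this
      linarith
    -- contradiction with H
    have ha0D : a0 ∈ D := interior_subset ha0
    obtain ⟨s, hs, hsv⟩ := H (a0 : E) ha0D
    have hmemW : -s • (a0 : E) ∈ W := by
      exact W.smul_mem _ (Submodule.subset_span ha0D)
    have : (-s • a0 : W) ∈ D := by
      simpa [hD] using hsv
    have := hfle _ this
    rw [map_smul, smul_eq_mul] at this
    nlinarith
  -- get a ball
  obtain ⟨ε, hε, hball⟩ := Metric.isOpen_iff.mp isOpen_interior 0 h0int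
  -- bound on C
  obtain ⟨R, hR0, hRle⟩ := hcomp.isBounded.exists_pos_norm_le
  refine ⟨ε / (2 * R), by positivity, fun v hv => ?_⟩
  set wv : W := ⟨v, Submodule.subset_span hv⟩ with hwv
  have hball' : -(ε / (2 * R)) • wv ∈ D := by
    apply interior_subset
    apply hball
    rw [Metric.mem_ball, dist_zero_right]
    have hnw : ‖wv‖ = ‖v‖ := rfl
    have hnorm : ‖(-(ε / (2 * R)) • wv : W)‖ = (ε / (2 * R)) * ‖v‖ := by
      rw [norm_smul, Real.norm_eq_abs, abs_neg, abs_of_pos (by positivity), hnw]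
    rw [hnorm]
    have : ε / (2 * R) * ‖v‖ ≤ ε / (2 * R) * R := by
      apply mul_le_mul_of_nonneg_left (hRle v hv) (by positivity)
    calc ε / (2 * R) * ‖v‖ ≤ ε / (2 * R) * R := this
      _ = ε / 2 := by field_simp
      _ < ε := by linarith
  simpa [hD, hwv] using hball'

theorem bdness_pos_iff_inner {n : ℕ}
    (Z : Set (EuclideanSpace ℝ (Fin n))) (hconv : Convex ℝ Z) (hcomp : IsCompact Z)
    (y : EuclideanSpace ℝ (Fin n)) (hy : y ∈ Z) :
    ((∀ x ∈ Z, weight Z y x ≠ 0) → 0 < bdness Z y) ∧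
      (bdness Z y = 0 ↔ ∃ x ∈ Z, weight Z y x = 0) := by
  have main : (∀ x ∈ Z, weight Z y x ≠ 0) → 0 < bdness Z y := by
    intro hne
    set C : Set (EuclideanSpace ℝ (Fin n)) := (fun z => z - y) '' Z with hC
    have hCconv : Convex ℝ C := by
      have h := hconv.translate (-y)
      have : (fun z => -y + z) '' Z = C := by
        ext v; simp [hC, sub_eq_neg_add]
      rwa [this] at h
    have hCcomp : IsCompact C := hcomp.image (continuous_id.sub continuous_const)
    have h0C : (0 : EuclideanSpace ℝ (Fin n)) ∈ C := ⟨y, hy, sub_self y⟩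
    have H : ∀ v ∈ C, ∃ s : ℝ, 0 < s ∧ -s • v ∈ C := by
      rintro v ⟨x, hx, rfl⟩
      have h1 : 0 < weight Z y x := (weight_nonneg hy x).lt_of_ne (Ne.symm (hne x hx))
      obtain ⟨t, ht, ht0⟩ := exists_lt_of_lt_csSup ⟨0, weight_set_zero_mem hy x⟩ h1
      obtain ⟨ht0', ht1, htz⟩ := ht
      have h1t : (1:ℝ) - t ≠ 0 := by linarith
      refine ⟨t / (1 - t), div_pos ht0 (by linarith), ?_⟩
      refine ⟨(1 - t)⁻¹ • (y - t • x), htz, ?_⟩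
      show (1 - t)⁻¹ • (y - t • x) - y = -(t / (1 - t)) • (x - y)
      match_scalars <;> field_simp <;> ring
    obtain ⟨σ, hσ, habs⟩ := absorb hCconv hCcomp h0C H
    set t := σ / (1 + σ) with hts
    have h1σ : (1:ℝ) + σ ≠ 0 := by linarith
    have ht0 : 0 < t := div_pos hσ (by linarith)
    have ht1 : t < 1 := by rw [hts, div_lt_one (by linarith)]; linarith
    have hwlb : ∀ x ∈ Z, t ≤ weight Z y x := by
      intro x hx
      apply le_csSup (weight_set_bddAbove Z y x)
      refine ⟨ht0.le, ht1, ?_⟩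
      obtain ⟨x', hx', hx'e⟩ := habs (x - y) ⟨x, hx, rfl⟩
      have hx'eq : x' = -σ • (x - y) + y := eq_add_of_sub_eq hx'e
      have heq : (1 - t)⁻¹ • (y - t • x) = x' := by
        rw [hx'eq, hts]
        match_scalars <;> field_simp <;> ring
      rw [heq]; exact hx'
    have hle : t ≤ bdness Z y := by
      apply le_csInf ⟨_, Set.mem_image_of_mem _ hy⟩
      rintro b ⟨x, hx, rfl⟩; exact hwlb x hx
    linarith
  refine ⟨main, ?_⟩
  constructor
  · intro h0
    by_contra hno
    push_neg at hno
    have := main (fun x hx => hno x hx)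
    rw [h0] at this
    exact lt_irrefl 0 this
  · rintro ⟨x, hx, hwx⟩
    have hbdd : BddBelow (weight Z y '' Z) := by
      refine ⟨0, ?_⟩
      rintro b ⟨x', hx', rfl⟩; exact weight_nonneg hy x'
    have hub : bdness Z y ≤ 0 := by
      rw [← hwx]; exact csInf_le hbdd ⟨x, hx, rfl⟩
    have hlb : 0 ≤ bdness Z y :=
      le_csInf ⟨_, Set.mem_image_of_mem _ hy⟩ (by rintro b ⟨x', hx', rfl⟩; exact weight_nonneg hy x')
    linarith
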